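/- Let ρ = (−1 + i·√3)/2 ∈ ℂ, let ω₁, η₁ ∈ ℂ, and set ω₂ = ρ·ω₁ and η₂ = ρ²·η₁. Assume the Legendre relation ω₂·η₁ − ω₁·η₂ = 2πi. Then ω₁·η₁ = 2π/√3, and for all integers a, b, putting ω = a·ω₁ + b·ω₂ and η = a·η₁ + b·η₂, one has ω·η = (a² − a·b + b²)·(2π/√3); moreover, if (a,b) ≠ (0,0) then there is no rational number r with ω·η = 2πi·r. -/
import Mathlib


open Complex

theorem equianharmonic_period_products (ω₁ η₁ ω₂ η₂ : ℂ)
    (ρ : ℂ) (hρ : ρ = (-1 + Complex.I * (Real.sqrt 3 : ℂ)) / 2)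
    (hω₂ : ω₂ = ρ * ω₁) (hη₂ : η₂ = ρ ^ 2 * η₁)
    (hL : ω₂ * η₁ - ω₁ * η₂ = 2 * (Real.pi : ℂ) * Complex.I) :
    ω₁ * η₁ = 2 * (Real.pi : ℂ) / (Real.sqrt 3 : ℂ) ∧
    ∀ a b : ℤ,
      ((a : ℂ) * ω₁ + (b : ℂ) * ω₂) * ((a : ℂ) * η₁ + (b : ℂ) * η₂) =
          ((a ^ 2 - a * b + b ^ 2 : ℤ) : ℂ) * (2 * (Real.pi : ℂ) / (Real.sqrt 3 : ℂ)) ∧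
      ((a, b) ≠ (0, 0) →
        ¬ ∃ r : ℚ, ((a : ℂ) * ω₁ + (b : ℂ) * ω₂) * ((a : ℂ) * η₁ + (b : ℂ) * η₂) =
            2 * (Real.pi : ℂ) * Complex.I * (r : ℂ)) := by
  set s : ℝ := Real.sqrt 3 with hs
  have hs3 : s ^ 2 = 3 := Real.sq_sqrt (by norm_num)
  have h3 : (s : ℂ) ^ 2 = 3 := by
    rw [← Complex.ofReal_pow, hs3]; norm_num
  have hI : (Complex.I) ^ 2 = -1 := Complex.I_sq
  have hspos : (0 : ℝ) < s := Real.sqrt_pos.mpr (by norm_num)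
  have hsne : (s : ℂ) ≠ 0 := by
    exact_mod_cast Complex.ofReal_ne_zero.mpr (ne_of_gt hspos)
  -- key identities for ρ
  have hsum : ρ ^ 2 + ρ = -1 := by
    rw [hρ]; linear_combination ((s:ℂ)^2/4) * hI - (1/4 : ℂ) * h3
  have hρ3 : ρ ^ 3 = 1 := by
    linear_combination (ρ - 1) * hsum
  have key : ω₁ * η₁ * (Complex.I * (s : ℂ)) = 2 * (Real.pi : ℂ) * Complex.I := by
    rw [hω₂, hη₂, hρ] at hL
    linear_combination hL + (ω₁ * η₁ * (s:ℂ)^2 / 4) * hI - (ω₁ * η₁ / 4) * h3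
  have h1 : ω₁ * η₁ = 2 * (Real.pi : ℂ) / (s : ℂ) := by
    rw [eq_div_iff hsne]
    linear_combination (-Complex.I) * key + (ω₁ * η₁ * (s:ℂ) - 2 * (Real.pi:ℂ)) * hI
  refine ⟨h1, fun a b => ?_⟩
  have hprod : ((a : ℂ) * ω₁ + (b : ℂ) * ω₂) * ((a : ℂ) * η₁ + (b : ℂ) * η₂) =
      ((a ^ 2 - a * b + b ^ 2 : ℤ) : ℂ) * (2 * (Real.pi : ℂ) / (s : ℂ)) := by
    rw [hω₂, hη₂]
    push_cast
    linear_combination ((a:ℂ) + (b:ℂ) * ρ) * ((a:ℂ) + (b:ℂ) * ρ^2) * h1 +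
      (2 * (Real.pi:ℂ) / (s:ℂ)) * (a:ℂ) * (b:ℂ) * hsum +
      (2 * (Real.pi:ℂ) / (s:ℂ)) * (b:ℂ)^2 * hρ3
  refine ⟨hprod, fun hab ⟨r, hr⟩ => ?_⟩
  set n : ℤ := a ^ 2 - a * b + b ^ 2 with hn
  have heq : ((n : ℝ) * (2 * Real.pi / s) : ℝ) = 0 := by
    have h2 : ((n : ℂ)) * (2 * (Real.pi : ℂ) / (s : ℂ)) =
        2 * (Real.pi : ℂ) * Complex.I * (r : ℂ) := hprod.symm.trans hr
    have h4 : (((n : ℝ) * (2 * Real.pi / s) : ℝ) : ℂ) =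
        ((2 * Real.pi * (r : ℝ) : ℝ) : ℂ) * Complex.I := by
      push_cast
      linear_combination h2
    have := congrArg Complex.re h4
    simpa using this
  have hnz : n ≠ 0 := by
    intro h0
    have hb : b = 0 := by nlinarith [sq_nonneg (2 * a - b), sq_nonneg b]
    have ha : a = 0 := by nlinarith [sq_nonneg a]
    exact hab (by simp [ha, hb])
  have : (n : ℝ) = 0 := by
    have h2 : (2 * Real.pi / s) ≠ 0 := by positivity
    exact (mul_eq_zero.mp heq).resolve_right h2
  exact hnz (by exact_mod_cast this)
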